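/- arXiv:2403.01303 — 4 statements merged into one kernel-verified Lean document; each statement's English description precedes it below -/
import Mathlib

section
/- If |F| > 2, then for any two vertices a, b of the unitary Cayley graph C_{T_n(F)} there exists a vertex c adjacent to both a and b; in particular the graph is connected. -/
open Matrix

/-- The subring of upper triangular `n × n` matrices over `F`. -/
def upperTri (F : Type) [Field F] (n : ℕ) : Subring (Matrix (Fin n) (Fin n) F) where
  carrier := {M | M.BlockTriangular id}
  zero_mem' := Matrix.blockTriangular_zero
  one_mem' := Matrix.blockTriangular_one
  add_mem' := fun ha hb => ha.add hb
  mul_mem' := fun ha hb => ha.mul hb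
  neg_mem' := fun ha => ha.neg

/-- The unitary Cayley graph of the ring `T_n(F)`. -/
def cayley (F : Type) [Field F] (n : ℕ) : SimpleGraph (upperTri F n) where
  Adj x y := x ≠ y ∧ IsUnit (x - y)
  symm := ⟨by
    intro x y ⟨hne, hu⟩
    exact ⟨hne.symm, by simpa using hu.neg⟩⟩
  loopless := ⟨fun x h => h.1 rfl⟩

lemma isUnit_of_det_ne_zero {F : Type} [Field F] {n : ℕ} (M : upperTri F n)
    (h : (M : Matrix (Fin n) (Fin n) F).det ≠ 0) : IsUnit M := by
  haveI : Invertible (M : Matrix (Fin n) (Fin n) F) := invertibleOfIsUnitDet _ h.isUnit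
  have hInv : (M : Matrix (Fin n) (Fin n) F)⁻¹.BlockTriangular id :=
    Matrix.blockTriangular_inv_of_blockTriangular M.2
  refine isUnit_iff_exists.2 ⟨⟨(M : Matrix (Fin n) (Fin n) F)⁻¹, hInv⟩, ?_, ?_⟩
  · exact Subtype.ext (Matrix.mul_nonsing_inv _ h.isUnit)
  · exact Subtype.ext (Matrix.nonsing_inv_mul _ h.isUnit)

/-- If `|F| > 2`, any two vertices of `C_{T_n(F)}` have a common neighbor; in
particular the graph is connected. -/
theorem stmt4 (F : Type) [Field F] [Fintype F] (n : ℕ) (hn : 0 < n)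
    (hF : 2 < Fintype.card F) :
    (∀ a b : upperTri F n, ∃ c : upperTri F n,
        (cayley F n).Adj c a ∧ (cayley F n).Adj c b) ∧
      (cayley F n).Connected := by
  haveI : Nontrivial (upperTri F n) := by
    refine ⟨0, 1, fun h => ?_⟩
    have h0 : ((0 : upperTri F n) : Matrix (Fin n) (Fin n) F) ⟨0, hn⟩ ⟨0, hn⟩ =
        ((1 : upperTri F n) : Matrix (Fin n) (Fin n) F) ⟨0, hn⟩ ⟨0, hn⟩ := by rw [h]
    simp at h0
  have key : ∀ a b : upperTri F n, ∃ c : upperTri F n,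
      (cayley F n).Adj c a ∧ (cayley F n).Adj c b := by
    intro a b
    set d : Matrix (Fin n) (Fin n) F := (a : Matrix (Fin n) (Fin n) F) - b with hd
    -- choose λ i ∉ {0, -d i i}
    classical
    have hchoice : ∀ i : Fin n, ∃ x : F, x ≠ 0 ∧ x ≠ -(d i i) := by
      intro i
      have hcard : (({0, -(d i i)} : Finset F)).card ≤ 2 :=
        (Finset.card_insert_le _ _).trans (by simp)
      have hne : (({0, -(d i i)} : Finset F)ᶜ).Nonempty := by
        rw [← Finset.card_pos, Finset.card_compl]
        omega
      obtain ⟨x, hx⟩ := hne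
      rw [Finset.mem_compl, Finset.mem_insert, Finset.mem_singleton, not_or] at hx
      exact ⟨x, hx.1, hx.2⟩
    choose lam hlam0 hlamd using hchoice
    set u : upperTri F n := ⟨Matrix.diagonal lam, Matrix.blockTriangular_diagonal lam⟩ with hu
    have hdetu : ((u : Matrix (Fin n) (Fin n) F)).det ≠ 0 := by
      rw [hu, Matrix.det_diagonal]
      exact Finset.prod_ne_zero_iff.2 fun i _ => hlam0 i
    have hca : IsUnit ((u + a) - a) := by
      rw [add_sub_cancel_right]
      exact isUnit_of_det_ne_zero u hdetu
    have hcb : IsUnit ((u + a) - b) := by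
      have hbt : ((u + a) - b : upperTri F n).1.BlockTriangular id := ((u + a) - b).2
      apply isUnit_of_det_ne_zero
      rw [Matrix.det_of_upperTriangular hbt]
      refine Finset.prod_ne_zero_iff.2 fun i _ => ?_
      have : (((u + a) - b : upperTri F n) : Matrix (Fin n) (Fin n) F) i i
          = lam i + d i i := by
        push_cast
        simp [hu, hd]
        ring
      rw [this]
      intro hcontra
      exact hlamd i (by linear_combination hcontra)
    refine ⟨u + a, ⟨?_, hca⟩, ⟨?_, hcb⟩⟩
    · exact fun h => hca.ne_zero (by rw [h]; simp)
    · exact fun h => hcb.ne_zero (by rw [h]; simp)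
  refine ⟨key, ?_⟩
  constructor
  · intro a b
    obtain ⟨c, hca, hcb⟩ := key a b
    exact (hca.symm.reachable).trans hcb.reachable
end

section
/- In C_{T_n(F)}, any clique has cardinality at most |F|, and the set of scalar matrices {λ·I : λ ∈ F} forms a clique of size |F|. -/
open Matrix

lemma diag_ne_zero_of_unit (F : Type) [Field F] (n : ℕ) (x : upperTri F n)
    (hx : IsUnit x) (i : Fin n) : (x : Matrix (Fin n) (Fin n) F) i i ≠ 0 := by
  have hu : IsUnit (x : Matrix (Fin n) (Fin n) F) := hx.map (upperTri F n).subtype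
  have hdet : IsUnit (x : Matrix (Fin n) (Fin n) F).det := hu.map Matrix.detMonoidHom
  have hbt : (x : Matrix (Fin n) (Fin n) F).BlockTriangular id := x.2
  rw [Matrix.det_of_upperTriangular hbt] at hdet
  intro h
  rw [isUnit_iff_ne_zero] at hdet
  exact hdet (Finset.prod_eq_zero (Finset.mem_univ i) h)

/-- Any clique of `C_{T_n(F)}` has at most `|F|` elements, and the set of scalar
matrices `{λ·I : λ ∈ F}` is a clique of size `|F|`. -/
theorem stmt12 (F : Type) [Field F] [Fintype F] [DecidableEq F] (n : ℕ) (hn : 0 < n) :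
    (∀ s : Finset (upperTri F n),
        (cayley F n).IsClique (s : Set (upperTri F n)) → s.card ≤ Fintype.card F) ∧
    (cayley F n).IsClique
      (Set.range fun c : F =>
        (⟨Matrix.diagonal fun _ => c, Matrix.blockTriangular_diagonal _⟩ : upperTri F n)) ∧
    Nat.card
      (Set.range fun c : F =>
        (⟨Matrix.diagonal fun _ => c, Matrix.blockTriangular_diagonal _⟩ : upperTri F n)) =
      Fintype.card F := by
  set i0 : Fin n := ⟨0, hn⟩
  refine ⟨?_, ?_, ?_⟩
  · intro s hs
    have : s.card ≤ (Finset.univ : Finset F).card := by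
      refine Finset.card_le_card_of_injOn
        (fun M => (M : Matrix (Fin n) (Fin n) F) i0 i0)
        (fun _ _ => Finset.mem_univ _) ?_
      intro x hx y hy hxy
      by_contra hne
      have hadj := hs (Finset.mem_coe.mpr hx) (Finset.mem_coe.mpr hy) hne
      have := diag_ne_zero_of_unit F n (x - y) hadj.2 i0
      apply this
      have : ((x - y : upperTri F n) : Matrix (Fin n) (Fin n) F) i0 i0
          = (x : Matrix (Fin n) (Fin n) F) i0 i0 - (y : Matrix (Fin n) (Fin n) F) i0 i0 := rfl
      rw [this]
      simp only at hxy
      rw [hxy, sub_self]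
    simpa using this
  · rintro _ ⟨c, rfl⟩ _ ⟨d, rfl⟩ hne
    have hcd : c ≠ d := by
      intro h; exact hne (by rw [h])
    constructor
    · exact hne
    · rw [isUnit_iff_exists]
      refine ⟨(⟨Matrix.diagonal fun _ => (c - d)⁻¹,
        Matrix.blockTriangular_diagonal _⟩ : upperTri F n), ?_, ?_⟩ <;>
      · apply Subtype.ext
        show _ = (1 : Matrix (Fin n) (Fin n) F)
        have hco : ((⟨Matrix.diagonal fun _ => c, Matrix.blockTriangular_diagonal _⟩ -
            ⟨Matrix.diagonal fun _ => d, Matrix.blockTriangular_diagonal _⟩ : upperTri F n) :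
            Matrix (Fin n) (Fin n) F) = Matrix.diagonal fun _ => c - d := by
          show Matrix.diagonal (fun _ => c) - Matrix.diagonal (fun _ => d) = _
          rw [Matrix.diagonal_sub]
        simp only [Subring.coe_mul, hco, Matrix.diagonal_mul_diagonal]
        simp [mul_inv_cancel₀ (sub_ne_zero.mpr hcd),
          inv_mul_cancel₀ (sub_ne_zero.mpr hcd)]
  · have hinj : Function.Injective fun c : F =>
        (⟨Matrix.diagonal fun _ => c, Matrix.blockTriangular_diagonal _⟩ : upperTri F n) := by
      intro c d h
      have := congrArg (fun M : upperTri F n => (M : Matrix (Fin n) (Fin n) F) i0 i0) h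
      simpa using this
    rw [Nat.card_range_of_injective hinj, Nat.card_eq_fintype_card]
end

section
/- For |F| = p^k > 2, the unitary Cayley graph C_{T_n(F)} is isomorphic to the semistrong product K_m • A(H(n, p^k)), where m = p^{kn(n−1)/2}, K_m is the complete graph on m vertices, and A(H(n,q)) is the graph on F^n where two n-tuples are adjacent iff they differ in every coordinate. -/
open Matrix

/-- The semistrong product `G • H`: `(u₁, v₁) ~ (u₂, v₂)` iff `v₁ ~_H v₂` and
(`u₁ ~_G u₂` or `u₁ = u₂`). -/
def semistrongProd {α β : Type} (G : SimpleGraph α) (H : SimpleGraph β) :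
    SimpleGraph (α × β) where
  Adj x y := H.Adj x.2 y.2 ∧ (G.Adj x.1 y.1 ∨ x.1 = y.1)
  symm := ⟨fun x y ⟨h1, h2⟩ => ⟨h1.symm, h2.imp (fun h => h.symm) (fun h => h.symm)⟩⟩
  loopless := ⟨fun x h => H.loopless.irrefl _ h.1⟩

/-- The antipodal graph of the Hamming graph `H(n, |S|)`: vertices are `n`-tuples
over `S`, adjacent iff they differ in every coordinate. -/
def antipodalHamming (S : Type) (n : ℕ) : SimpleGraph (Fin n → S) where
  Adj u v := u ≠ v ∧ ∀ i, u i ≠ v i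
  symm := ⟨fun u v ⟨h1, h2⟩ => ⟨h1.symm, fun i => (h2 i).symm⟩⟩
  loopless := ⟨fun u h => h.1 rfl⟩

abbrev ltPairs (n : ℕ) := {p : Fin n × Fin n // p.1 < p.2}

def ltPairsEquiv (n : ℕ) : ltPairs n ≃ Σ j : Fin n, Fin j.1 where
  toFun p := ⟨p.1.2, ⟨p.1.1, p.2⟩⟩
  invFun x := ⟨(⟨x.2.1, x.2.2.trans x.1.2⟩, x.1), x.2.2⟩
  left_inv p := rfl
  right_inv x := rfl

lemma card_ltPairs (n : ℕ) : Fintype.card (ltPairs n) = n * (n - 1) / 2 := by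
  rw [Fintype.card_congr (ltPairsEquiv n), Fintype.card_sigma]
  simp only [Fintype.card_fin]
  rw [Fin.sum_univ_eq_sum_range (fun i => i) n, Finset.sum_range_id]

def triEquiv (F : Type) [Field F] (n : ℕ) :
    upperTri F n ≃ (ltPairs n → F) × (Fin n → F) where
  toFun M := (fun p => M.1 p.1.1 p.1.2, fun i => M.1 i i)
  invFun x := ⟨Matrix.of fun i j =>
      if h : i < j then x.1 ⟨(i, j), h⟩ else if i = j then x.2 i else 0, by
    intro i j hij
    have hij' : j < i := hij
    simp only [Matrix.of_apply]
    rw [dif_neg (by omega : ¬ i < j), if_neg (by omega : ¬ i = j)]⟩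
  left_inv M := by
    apply Subtype.ext
    ext i j
    simp only [Matrix.of_apply]
    rcases lt_trichotomy i j with h | h | h
    · rw [dif_pos h]
    · rw [dif_neg (by omega), if_pos h, h]
    · rw [dif_neg (by omega), if_neg (by omega)]
      exact (M.2 h).symm
  right_inv x := by
    ext p
    · simp only [Matrix.of_apply]
      rw [dif_pos p.2]
    · simp only [Matrix.of_apply]
      rw [dif_neg (lt_irrefl _)]; simp

lemma isUnit_iff_diag {F : Type} [Field F] {n : ℕ} (M : upperTri F n) :
    IsUnit M ↔ ∀ i, M.1 i i ≠ 0 := by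
  constructor
  · intro h i hzero
    have h2 : IsUnit M.1 := h.map (upperTri F n).subtype
    have hdet : IsUnit M.1.det := h2.map (Matrix.detMonoidHom)
    rw [Matrix.det_of_upperTriangular M.2] at hdet
    rw [isUnit_iff_ne_zero] at hdet
    exact hdet (Finset.prod_eq_zero (Finset.mem_univ i) hzero)
  · intro h
    have hdet : IsUnit M.1.det := by
      rw [Matrix.det_of_upperTriangular M.2, isUnit_iff_ne_zero]
      exact Finset.prod_ne_zero_iff.mpr fun i _ => h i
    haveI : Invertible M.1 := M.1.invertibleOfIsUnitDet hdet
    have hinv : (M.1)⁻¹.BlockTriangular id :=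
      Matrix.blockTriangular_inv_of_blockTriangular M.2
    rw [isUnit_iff_exists]
    refine ⟨⟨(M.1)⁻¹, hinv⟩, ?_, ?_⟩
    · exact Subtype.ext (Matrix.mul_nonsing_inv _ hdet)
    · exact Subtype.ext (Matrix.nonsing_inv_mul _ hdet)

/-- For `|F| = p^k > 2`, the unitary Cayley graph `C_{T_n(F)}` is isomorphic to the
semistrong product `K_m • A(H(n, p^k))` with `m = p^(k·n(n-1)/2)`. -/
theorem stmt13 (F : Type) [Field F] [Fintype F] (p k n : ℕ) (hp : p.Prime)
    (hcard : Fintype.card F = p ^ k) (hgt : 2 < p ^ k) (hn : 0 < n) :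
    Nonempty
      ((cayley F n) ≃g
        semistrongProd (⊤ : SimpleGraph (Fin (p ^ (k * (n * (n - 1) / 2)))))
          (antipodalHamming F n)) := by
  have hcardfun : Fintype.card (ltPairs n → F) = p ^ (k * (n * (n - 1) / 2)) := by
    rw [Fintype.card_fun, hcard, card_ltPairs, ← pow_mul]
  let e1 : upperTri F n ≃ Fin (p ^ (k * (n * (n - 1) / 2))) × (Fin n → F) :=
    (triEquiv F n).trans
      (Equiv.prodCongr (Fintype.equivFinOfCardEq hcardfun) (Equiv.refl _))
  refine ⟨⟨e1, ?_⟩⟩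
  intro x y
  show (antipodalHamming F n).Adj _ _ ∧ _ ↔ (cayley F n).Adj x y
  have he2 : ∀ z : upperTri F n, (e1 z).2 = fun i => z.1 i i := fun z => rfl
  rw [he2, he2]
  constructor
  · rintro ⟨⟨hne, hd⟩, _⟩
    have hxy : x ≠ y := by
      intro h; exact hne (by rw [h])
    refine ⟨hxy, (isUnit_iff_diag (x - y)).mpr fun i => ?_⟩
    have : (x - y).1 i i = x.1 i i - y.1 i i := rfl
    rw [this]
    exact sub_ne_zero.mpr (hd i)
  · rintro ⟨hne, hu⟩
    have hd := (isUnit_iff_diag (x - y)).mp hu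
    have hd' : ∀ i, x.1 i i ≠ y.1 i i := by
      intro i
      have : (x - y).1 i i = x.1 i i - y.1 i i := rfl
      exact sub_ne_zero.mp (this ▸ hd i)
    refine ⟨⟨?_, hd'⟩, ?_⟩
    · intro h
      exact hd' ⟨0, hn⟩ (congrFun h ⟨0, hn⟩)
    · by_cases h : (e1 x).1 = (e1 y).1
      · exact Or.inr h
      · exact Or.inl h
end

section
/- The map sending an upper triangular matrix a to the pair (strictly upper triangular part of a, diagonal vector of a) is a graph isomorphism from C_{T_n(F)} to the graph on N × F^n (N = strictly upper triangular matrices) where (x,u) ~ (y,v) iff u_i ≠ v_i for all i, provided |F| > 2. -/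
open Matrix

/-- Strictly upper triangular `n × n` matrices over `F`. -/
def strictUpper (F : Type) [Field F] (n : ℕ) : Type :=
  {M : Matrix (Fin n) (Fin n) F // ∀ i j : Fin n, j ≤ i → M i j = 0}

/-- The graph on `N × F^n` (`N` = strictly upper triangular matrices) where
`(x, u) ~ (y, v)` iff `u i ≠ v i` for all `i`; this is exactly
`K_m • A(H(n, |F|))`. -/
def targetGraph (F : Type) [Field F] (n : ℕ) [NeZero n] :
    SimpleGraph (strictUpper F n × (Fin n → F)) where
  Adj x y := ∀ i, x.2 i ≠ y.2 i
  symm := ⟨fun x y h i => (h i).symm⟩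
  loopless := ⟨fun x h => h ⟨0, Nat.pos_of_ne_zero (NeZero.ne n)⟩ rfl⟩

/-- A upper triangular matrix is a unit in the subring of upper triangular
matrices iff all its diagonal entries are nonzero. -/
lemma upperTri_isUnit_iff {F : Type} [Field F] {n : ℕ} (x : upperTri F n) :
    IsUnit x ↔ ∀ i, (x : Matrix (Fin n) (Fin n) F) i i ≠ 0 := by
  constructor
  · intro hu i
    have hM : IsUnit (x : Matrix (Fin n) (Fin n) F) := hu.map (upperTri F n).subtype
    have hdet : IsUnit (x : Matrix (Fin n) (Fin n) F).det :=
      (Matrix.isUnit_iff_isUnit_det _).mp hM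
    rw [Matrix.det_of_upperTriangular x.2] at hdet
    have := hdet.ne_zero
    intro h0
    exact this (Finset.prod_eq_zero (Finset.mem_univ i) h0)
  · intro hd
    set M : Matrix (Fin n) (Fin n) F := (x : Matrix (Fin n) (Fin n) F) with hM
    have hdet : IsUnit M.det := by
      rw [Matrix.det_of_upperTriangular x.2]
      exact (Finset.prod_ne_zero_iff.mpr fun i _ => hd i).isUnit
    haveI : Invertible M := M.invertibleOfIsUnitDet hdet
    have hinv : M⁻¹ ∈ upperTri F n :=
      Matrix.blockTriangular_inv_of_blockTriangular x.2
    rw [isUnit_iff_exists]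
    refine ⟨⟨M⁻¹, hinv⟩, ?_, ?_⟩ <;> apply Subtype.ext
    · show M * M⁻¹ = 1
      exact Matrix.mul_nonsing_inv M hdet
    · show M⁻¹ * M = 1
      exact Matrix.nonsing_inv_mul M hdet

/-- For `|F| > 2`, the map sending an upper triangular matrix to the pair
(strictly upper triangular part, diagonal vector) is a graph isomorphism from
`C_{T_n(F)}` onto the graph `targetGraph F n`. -/
theorem stmt14 (F : Type) [Field F] [Fintype F] (hF : 2 < Fintype.card F)
    (n : ℕ) [NeZero n] :
    ∃ φ : upperTri F n → strictUpper F n × (Fin n → F),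
      (∀ a : upperTri F n,
        φ a =
          (⟨fun i j => if i < j then (a : Matrix (Fin n) (Fin n) F) i j else 0,
              fun i j hji => if_neg (fun hij => absurd hij (not_lt.mpr hji))⟩,
           fun i => (a : Matrix (Fin n) (Fin n) F) i i)) ∧
      Function.Bijective φ ∧
      ∀ a b : upperTri F n,
        (cayley F n).Adj a b ↔ (targetGraph F n).Adj (φ a) (φ b) := by
  refine ⟨fun a =>
    (⟨fun i j => if i < j then (a : Matrix (Fin n) (Fin n) F) i j else 0,
        fun i j hji => if_neg (fun hij => absurd hij (not_lt.mpr hji))⟩,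
     fun i => (a : Matrix (Fin n) (Fin n) F) i i), fun a => rfl, ⟨?_, ?_⟩, ?_⟩
  · -- injective
    intro a b h
    have h1 := congrArg (fun p => p.1.1) h
    have h2 := congrArg Prod.snd h
    apply Subtype.ext
    ext i j
    rcases lt_trichotomy i j with hij | hij | hij
    · have := congrFun (congrFun h1 i) j
      simpa [hij] using this
    · subst hij
      exact congrFun h2 i
    · rw [a.2 (show id j < id i from hij), b.2 (show id j < id i from hij)]
  · -- surjective
    intro ⟨x, u⟩
    have hmem : (fun i j => if i = j then u i else x.1 i j) ∈ upperTri F n := by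
      intro i j hij
      have : ¬ (i = j) := fun h => absurd (h ▸ hij) (lt_irrefl _)
      simp only [if_neg this]
      exact x.2 i j (le_of_lt hij)
    refine ⟨⟨_, hmem⟩, ?_⟩
    refine Prod.ext (Subtype.ext ?_) (funext fun i => by simp)
    funext i j
    by_cases hij : i < j
    · simp only [if_pos hij, if_neg (ne_of_lt hij)]
    · simp only [if_neg hij]
      exact (x.2 i j (not_lt.mp hij)).symm
  · -- adjacency
    intro a b
    constructor
    · intro ⟨_, hu⟩ i
      have := (upperTri_isUnit_iff (a - b)).mp hu i
      have hsub : ((a - b : upperTri F n) : Matrix (Fin n) (Fin n) F) i i =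
          (a : Matrix (Fin n) (Fin n) F) i i - (b : Matrix (Fin n) (Fin n) F) i i := by
        simp
      rw [hsub] at this
      exact sub_ne_zero.mp this
    · intro h
      have hd : ∀ i, ((a - b : upperTri F n) : Matrix (Fin n) (Fin n) F) i i ≠ 0 := by
        intro i
        have : (a : Matrix (Fin n) (Fin n) F) i i - (b : Matrix (Fin n) (Fin n) F) i i ≠ 0 :=
          sub_ne_zero.mpr (h i)
        simpa using this
      refine ⟨?_, (upperTri_isUnit_iff _).mpr hd⟩
      intro hab
      exact h ⟨0, Nat.pos_of_ne_zero (NeZero.ne n)⟩ (by rw [hab])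
end
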